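/- arXiv:2407.14234 — 3 statements merged into one kernel-verified Lean document; each statement's English description precedes it below -/
import Mathlib

section
/- Natural operations on groups in one variable are represented by the integers: natural transformations from the forgetful functor U : Grp ⥤ Type to itself are in bijection with ℤ, with n corresponding to the operation x ↦ x^n. -/
open CategoryTheory

/-- The natural transformation of the forgetful functor on groups given by `x ↦ x ^ n`. -/
def zpowNatTrans (n : ℤ) : forget GrpCat.{u} ⟶ forget GrpCat.{u} where
  app := fun G => TypeCat.ofHom fun (x : G) => x ^ n
  naturality := fun G H f => by
    ext (x : G)
    simpa using map_zpow (show (G : Type u) →* (H : Type u) from f) x n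

/-- The group of integers as an object of `GrpCat`. -/
def ZGrp : GrpCat := GrpCat.of (Multiplicative ℤ)

/-- The generator `1` of the integers, as an element of the forgetful functor applied to `ZGrp`. -/
def zGen : (forget GrpCat).obj ZGrp := Multiplicative.ofAdd (1 : ℤ)

theorem natural_operations_eq_int :
    Function.Bijective (zpowNatTrans : ℤ → (forget GrpCat.{0} ⟶ forget GrpCat.{0})) := by
  constructor
  · intro m n h
    have h1 := congrArg (fun η : forget GrpCat.{0} ⟶ forget GrpCat.{0} => η.app ZGrp zGen) h
    have h2 : (Multiplicative.ofAdd (1:ℤ)) ^ m = (Multiplicative.ofAdd (1:ℤ)) ^ n := h1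
    have h3 := congrArg Multiplicative.toAdd h2
    simpa [← ofAdd_zsmul] using h3
  · intro η
    refine ⟨Multiplicative.toAdd (show Multiplicative ℤ from η.app ZGrp zGen), ?_⟩
    ext G x
    have key : η.app G ((zpowersHom G x) (Multiplicative.ofAdd (1:ℤ)))
        = (zpowersHom G x) (show Multiplicative ℤ from η.app ZGrp zGen) :=
      by have := congrArg (fun f : (forget GrpCat.{0}).obj ZGrp ⟶ (forget GrpCat.{0}).obj (GrpCat.of G) => f zGen) (η.naturality (GrpCat.ofHom (zpowersHom G x))); exact this
    have h1 : (zpowersHom G x) (Multiplicative.ofAdd (1:ℤ)) = x := by simp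
    rw [h1] at key
    have h2 : (zpowersHom G x) (show Multiplicative ℤ from η.app ZGrp zGen)
        = (show (G : Type) from x) ^ Multiplicative.toAdd (show Multiplicative ℤ from η.app ZGrp zGen) := rfl
    rw [h2] at key
    exact key.symm
end

section
/- Closed 1-forms on a real vector space are exact (Poincaré lemma in degree 1, star-shaped case): if ω : ℝⁿ → (ℝⁿ →L[ℝ] ℝ) is a C¹ map of linear functionals such that its derivative is symmetric (∂_i ω_j = ∂_j ω_i everywhere), then there exists f : ℝⁿ → ℝ differentiable with fderiv ℝ f x = ω x for all x; one may take f(x) = ∫_0^1 ω(t x)(x) dt. -/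
open MeasureTheory intervalIntegral Metric Set

theorem poincare_lemma_degree_one {n : ℕ}
    (ω : (Fin n → ℝ) → ((Fin n → ℝ) →L[ℝ] ℝ))
    (hω : ContDiff ℝ 1 ω)
    (hclosed : ∀ (x u v : Fin n → ℝ), fderiv ℝ ω x u v = fderiv ℝ ω x v u) :
    ∃ f : (Fin n → ℝ) → ℝ, ∀ x, HasFDerivAt f (ω x) x := by
  set E := (Fin n → ℝ)
  have hdiff : Differentiable ℝ ω := hω.differentiable one_ne_zero
  have hω' : Continuous (fderiv ℝ ω) := hω.continuous_fderiv one_ne_zero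
  set F' : E → ℝ → (E →L[ℝ] ℝ) :=
    fun y t => t • (fderiv ℝ ω (t • y) y) + ω (t • y) with hF'def
  -- the key pointwise derivative computation
  have hkey : ∀ (t : ℝ) (y : E), HasFDerivAt (fun z : E => ω (t • z) z) (F' y t) y := by
    intro t y
    have h1 : HasFDerivAt (fun z : E => t • z) (t • ContinuousLinearMap.id ℝ E) y :=
      (hasFDerivAt_id y).const_smul t
    have h2 : HasFDerivAt (fun z : E => ω (t • z))
        ((fderiv ℝ ω (t • y)).comp (t • ContinuousLinearMap.id ℝ E)) y :=
      ((hdiff (t • y)).hasFDerivAt).comp y h1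
    have h3 := h2.clm_apply (hasFDerivAt_id y)
    refine h3.congr_fderiv ?_
    refine ContinuousLinearMap.ext fun v => ?_
    simp only [hF'def, ContinuousLinearMap.add_apply, ContinuousLinearMap.smul_apply,
      ContinuousLinearMap.comp_apply, ContinuousLinearMap.flip_apply,
      ContinuousLinearMap.coe_id, id_eq, ContinuousLinearMap.coe_smul', Pi.smul_apply,
      _root_.map_smul, smul_eq_mul, ContinuousLinearMap.id_apply]
    rw [hclosed (t • y) y v]
    ring
  -- continuity of F' in both variables
  have hcont : Continuous (fun p : ℝ × E => F' p.2 p.1) := by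
    have hsm : Continuous (fun p : ℝ × E => p.1 • p.2) := continuous_fst.smul continuous_snd
    exact (continuous_fst.smul ((hω'.comp hsm).clm_apply continuous_snd)).add (hω.continuous.comp hsm)
  refine ⟨fun y => ∫ t in (0:ℝ)..1, ω (t • y) y, fun x => ?_⟩
  -- bound on a compact neighborhood
  obtain ⟨C, hC⟩ : ∃ C, ∀ p ∈ (uIcc (0:ℝ) 1) ×ˢ closedBall x 1, ‖F' p.2 p.1‖ ≤ C :=
    ((isCompact_uIcc).prod (isCompact_closedBall x 1)).exists_bound_of_continuousOn
      hcont.continuousOn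
  have hFcont : ∀ y : E, Continuous (fun t : ℝ => ω (t • y) y) := fun y =>
    ((hω.continuous.comp ((continuous_id.smul continuous_const)))).clm_apply continuous_const
  have hF'cont : Continuous (fun t : ℝ => F' x t) :=
    hcont.comp (continuous_id.prodMk continuous_const)
  have main : HasFDerivAt (fun y : E => ∫ t in (0:ℝ)..1, ω (t • y) y)
      (∫ t in (0:ℝ)..1, F' x t) x := by
    apply intervalIntegral.hasFDerivAt_integral_of_dominated_of_fderiv_le
      (F := fun y t => ω (t • y) y) (bound := fun _ => C) (s := ball x 1) (ball_mem_nhds x one_pos)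
    · exact Filter.Eventually.of_forall fun y => (hFcont y).aestronglyMeasurable
    · exact (hFcont x).intervalIntegrable 0 1
    · exact hF'cont.aestronglyMeasurable
    · refine Filter.Eventually.of_forall fun t ht y hy => hC (t, y) ?_
      exact ⟨uIoc_subset_uIcc ht, ball_subset_closedBall hy⟩
    · exact intervalIntegrable_const
    · exact Filter.Eventually.of_forall fun t _ y _ => hkey t y
  have hInt : IntervalIntegrable (F' x) volume 0 1 := hF'cont.intervalIntegrable 0 1
  have heq : (∫ t in (0:ℝ)..1, F' x t) = ω x := by
    ext v
    rw [ContinuousLinearMap.intervalIntegral_apply hInt v]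
    have hg : ∀ t : ℝ, HasDerivAt (fun t : ℝ => t * ω (t • x) v) (F' x t v) t := by
      intro t
      have ha : HasDerivAt (fun t : ℝ => t • x) x t := by
        simpa using (hasDerivAt_id t).smul_const x
      have hb : HasDerivAt (fun t : ℝ => ω (t • x)) (fderiv ℝ ω (t • x) x) t :=
        (hdiff (t • x)).hasFDerivAt.comp_hasDerivAt t ha
      have hc : HasDerivAt (fun t : ℝ => ω (t • x) v) (fderiv ℝ ω (t • x) x v) t := by
        simpa using hb.clm_apply (hasDerivAt_const t v)
      have := (hasDerivAt_id t).mul hc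
      refine this.congr_deriv ?_
      simp only [hF'def, ContinuousLinearMap.add_apply, ContinuousLinearMap.smul_apply,
        smul_eq_mul, id_eq]
      ring
    have hintv : Continuous (fun t : ℝ => F' x t v) := hF'cont.clm_apply continuous_const
    have := intervalIntegral.integral_eq_sub_of_hasDerivAt (fun t _ => hg t)
      (hintv.intervalIntegrable 0 1)
    simpa using this
  rwa [heq] at main
end

section
/- Fullness criterion in the gauge category over the identity diffeomorphism: working on ℝⁿ, if A and A' are differentiable vector fields with equal field strengths (∂_μ A'_ν − ∂_ν A'_μ = ∂_μ A_ν − ∂_ν A_μ everywhere), then there exists a scalar function s : ℝⁿ → ℝ with A'_μ = A_μ + ∂_μ s, i.e., A and A' are gauge related. -/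
open MeasureTheory intervalIntegral Metric

variable {n : ℕ}

/-- Projection onto coordinate `i`, as a continuous linear map. -/
noncomputable def prj (i : Fin n) : (Fin n → ℝ) →L[ℝ] ℝ :=
  ContinuousLinearMap.proj (R := ℝ) (φ := fun _ : Fin n => ℝ) i

@[simp] lemma prj_apply (i : Fin n) (x : Fin n → ℝ) : prj i x = x i := rfl

lemma norm_prj_le (i : Fin n) : ‖prj (n := n) i‖ ≤ 1 := by
  refine ContinuousLinearMap.opNorm_le_bound _ zero_le_one (fun x => ?_)
  simpa using norm_le_pi_norm x i

lemma hasFDerivAt_prj (i : Fin n) (x : Fin n → ℝ) :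
    HasFDerivAt (fun y : Fin n → ℝ => y i) (prj i) x := by
  exact (prj i).hasFDerivAt (x := x)

/-- The candidate derivative of the potential as a function of base point and time. -/
noncomputable def Fd (B : (Fin n → ℝ) → (Fin n → ℝ)) (x : Fin n → ℝ) (t : ℝ) :
    (Fin n → ℝ) →L[ℝ] ℝ :=
  ∑ i : Fin n, (B (t • x) i • prj i
    + x i • ((prj i).comp
        ((fderiv ℝ B (t • x)).comp (t • ContinuousLinearMap.id ℝ (Fin n → ℝ)))))

/-- The potential: line integral along the segment from `0` to `x`. -/
noncomputable def sPot (B : (Fin n → ℝ) → (Fin n → ℝ)) (x : Fin n → ℝ) : ℝ :=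
  ∫ t in (0:ℝ)..1, ∑ i : Fin n, B (t • x) i * x i

theorem hasFDerivAt_inner {B : (Fin n → ℝ) → (Fin n → ℝ)} (hB : ContDiff ℝ 1 B)
    (t : ℝ) (x : Fin n → ℝ) :
    HasFDerivAt (fun y => ∑ i : Fin n, B (t • y) i * y i) (Fd B x t) x := by
  have h1 : HasFDerivAt (fun y : Fin n → ℝ => t • y)
      (t • ContinuousLinearMap.id ℝ (Fin n → ℝ)) x := by
    simpa using (t • ContinuousLinearMap.id ℝ (Fin n → ℝ)).hasFDerivAt (x := x)
  have h2 : HasFDerivAt B (fderiv ℝ B (t • x)) (t • x) :=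
    ((hB.differentiable one_ne_zero) (t • x)).hasFDerivAt
  have h3 : HasFDerivAt (fun y => B (t • y))
      ((fderiv ℝ B (t • x)).comp (t • ContinuousLinearMap.id ℝ (Fin n → ℝ))) x :=
    h2.comp x h1
  apply HasFDerivAt.fun_sum
  intro i _
  have h4 : HasFDerivAt (fun y => B (t • y) i)
      ((prj i).comp
        ((fderiv ℝ B (t • x)).comp (t • ContinuousLinearMap.id ℝ (Fin n → ℝ)))) x := by
    have h := (hasFDerivAt_prj i (B (t • x))).comp x h3; exact h
  exact h4.mul (hasFDerivAt_prj i x)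

theorem continuous_Fd {B : (Fin n → ℝ) → (Fin n → ℝ)} (hB : ContDiff ℝ 1 B)
    (x : Fin n → ℝ) : Continuous fun t => Fd B x t := by
  apply continuous_finset_sum
  intro i _
  have hsm : Continuous fun t : ℝ => t • x := continuous_id.smul continuous_const
  have h1 : Continuous fun t : ℝ => B (t • x) i :=
    (continuous_apply i).comp (hB.continuous.comp hsm)
  have h2 : Continuous fun t : ℝ => fderiv ℝ B (t • x) :=
    (hB.continuous_fderiv one_ne_zero).comp hsm
  have h3 : Continuous fun t : ℝ => t • ContinuousLinearMap.id ℝ (Fin n → ℝ) :=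
    continuous_id.smul continuous_const
  exact (h1.smul continuous_const).add
    (((continuous_const.clm_comp (h2.clm_comp h3))).const_smul (x i))

theorem hasFDerivAt_sPot {B : (Fin n → ℝ) → (Fin n → ℝ)} (hB : ContDiff ℝ 1 B)
    (x₀ : Fin n → ℝ) :
    HasFDerivAt (sPot B) (∫ t in (0:ℝ)..1, Fd B x₀ t) x₀ := by
  set R : ℝ := ‖x₀‖ + 1 with hR
  have hR0 : 0 ≤ R := by positivity
  obtain ⟨M, hM⟩ := (isCompact_closedBall (0 : Fin n → ℝ) R).exists_bound_of_continuousOn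
    hB.continuous.continuousOn
  obtain ⟨K, hK⟩ := (isCompact_closedBall (0 : Fin n → ℝ) R).exists_bound_of_continuousOn
    (hB.continuous_fderiv one_ne_zero).continuousOn
  have hM0 : 0 ≤ M := le_trans (norm_nonneg _) (hM 0 (mem_closedBall_self hR0))
  have hK0 : 0 ≤ K := le_trans (norm_nonneg _) (hK 0 (mem_closedBall_self hR0))
  have key : ∀ t ∈ Set.uIoc (0:ℝ) 1, ∀ x ∈ ball x₀ 1, ‖Fd B x t‖ ≤ n * (M + R * K) := by
    intro t ht x hx
    rw [Set.uIoc_of_le zero_le_one] at ht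
    set J : (Fin n → ℝ) →L[ℝ] (Fin n → ℝ) := t • ContinuousLinearMap.id ℝ (Fin n → ℝ) with hJ
    set L : (Fin n → ℝ) →L[ℝ] (Fin n → ℝ) := fderiv ℝ B (t • x) with hL
    have htabs : ‖t‖ ≤ 1 := by
      rw [Real.norm_eq_abs, abs_of_pos ht.1]; exact ht.2
    have hxR : ‖x‖ ≤ R := by
      have h1 : ‖x - x₀‖ < 1 := mem_ball_iff_norm.mp hx
      have h2 : ‖x‖ ≤ ‖x₀‖ + ‖x - x₀‖ := by
        simpa using norm_add_le x₀ (x - x₀)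
      rw [hR]; linarith
    have htx : t • x ∈ closedBall (0 : Fin n → ℝ) R := by
      rw [mem_closedBall_zero_iff, norm_smul]
      calc ‖t‖ * ‖x‖ ≤ 1 * R := mul_le_mul htabs hxR (norm_nonneg _) zero_le_one
        _ = R := one_mul R
    have hLK : ‖L‖ ≤ K := hK _ htx
    have hid : ‖J‖ ≤ 1 := by
      refine le_trans (ContinuousLinearMap.opNorm_smul_le t _) ?_
      calc ‖t‖ * ‖ContinuousLinearMap.id ℝ (Fin n → ℝ)‖ ≤ 1 * 1 :=
            mul_le_mul htabs ContinuousLinearMap.norm_id_le (norm_nonneg _) zero_le_one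
        _ = 1 := one_mul 1
    have hterm : ∀ i : Fin n,
        ‖B (t • x) i • prj i + x i • ((prj i).comp (L.comp J))‖ ≤ M + R * K := by
      intro i
      refine le_trans (norm_add_le _ _) (add_le_add ?_ ?_)
      · refine le_trans (ContinuousLinearMap.opNorm_smul_le _ _) ?_
        have h1 : ‖B (t • x) i‖ ≤ M := le_trans (norm_le_pi_norm _ i) (hM _ htx)
        calc ‖B (t • x) i‖ * ‖prj (n := n) i‖ ≤ M * 1 :=
              mul_le_mul h1 (norm_prj_le i) (norm_nonneg _) hM0
          _ = M := mul_one M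
      · refine le_trans (ContinuousLinearMap.opNorm_smul_le _ _) ?_
        have hxi : ‖x i‖ ≤ R := le_trans (norm_le_pi_norm _ i) hxR
        have hcomp : ‖(prj (n := n) i).comp (L.comp J)‖ ≤ K := by
          refine le_trans (ContinuousLinearMap.opNorm_comp_le _ _) ?_
          have h2 : ‖L.comp J‖ ≤ K := by
            refine le_trans (ContinuousLinearMap.opNorm_comp_le _ _) ?_
            calc ‖L‖ * ‖J‖ ≤ K * 1 := mul_le_mul hLK hid (norm_nonneg _) hK0
              _ = K := mul_one K
          calc ‖prj (n := n) i‖ * ‖L.comp J‖ ≤ 1 * K :=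
                mul_le_mul (norm_prj_le i) h2 (norm_nonneg _) zero_le_one
            _ = K := one_mul K
        exact mul_le_mul hxi hcomp (norm_nonneg _) hR0
    have : ‖Fd B x t‖ ≤ ∑ i : Fin n,
        ‖B (t • x) i • prj i + x i • ((prj i).comp (L.comp J))‖ := by
      rw [Fd, hL, hJ]
      exact norm_sum_le _ _
    refine le_trans this (le_trans (Finset.sum_le_sum fun i _ => hterm i) ?_)
    simp [Finset.sum_const, nsmul_eq_mul, mul_add]
  have cF : ∀ x : Fin n → ℝ, Continuous fun t : ℝ => ∑ i : Fin n, B (t • x) i * x i := by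
    intro x
    apply continuous_finset_sum
    intro i _
    exact ((continuous_apply i).comp
      (hB.continuous.comp (continuous_id.smul continuous_const))).mul continuous_const
  exact intervalIntegral.hasFDerivAt_integral_of_dominated_of_fderiv_le
    (μ := volume) (bound := fun _ => (n : ℝ) * (M + R * K)) (ball_mem_nhds x₀ zero_lt_one)
    (Filter.Eventually.of_forall fun x => ((cF x).aestronglyMeasurable))
    ((cF x₀).intervalIntegrable _ _)
    ((continuous_Fd hB x₀).aestronglyMeasurable)
    (Filter.Eventually.of_forall key)
    intervalIntegrable_const
    (Filter.Eventually.of_forall fun t _ x _ => hasFDerivAt_inner hB t x)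

theorem fderiv_comp_eq {B : (Fin n → ℝ) → (Fin n → ℝ)} (hB : ContDiff ℝ 1 B)
    (i : Fin n) (y : Fin n → ℝ) :
    fderiv ℝ (fun z => B z i) y = (prj i).comp (fderiv ℝ B y) :=
  ((hasFDerivAt_prj i (B y)).comp y ((hB.differentiable one_ne_zero) y).hasFDerivAt).fderiv

theorem clm_apply_eq_sum (f : (Fin n → ℝ) →L[ℝ] ℝ) (x : Fin n → ℝ) :
    f x = ∑ i : Fin n, x i * f (Pi.single i 1) := by
  have hrepr : x = ∑ i : Fin n, x i • (Pi.single i 1 : Fin n → ℝ) := by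
    ext j
    simp [Finset.sum_apply, Pi.single_apply]
  conv_lhs => rw [hrepr]
  rw [map_sum]
  simp [_root_.map_smul]

theorem Fd_apply {B : (Fin n → ℝ) → (Fin n → ℝ)} (hB : ContDiff ℝ 1 B)
    (hcl : ∀ (μ ν : Fin n) (y : Fin n → ℝ),
      fderiv ℝ (fun z => B z ν) y (Pi.single μ 1)
        = fderiv ℝ (fun z => B z μ) y (Pi.single ν 1))
    (x : Fin n → ℝ) (t : ℝ) (μ : Fin n) :
    Fd B x t (Pi.single μ 1)
      = B (t • x) μ + t * fderiv ℝ (fun y => B y μ) (t • x) x := by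
  rw [Fd]
  simp only [ContinuousLinearMap.sum_apply, ContinuousLinearMap.add_apply,
    ContinuousLinearMap.smul_apply, ContinuousLinearMap.coe_comp', Function.comp_apply,
    ContinuousLinearMap.coe_smul', Pi.smul_apply, ContinuousLinearMap.coe_id', id_eq,
    prj_apply, smul_eq_mul]
  rw [Finset.sum_add_distrib]
  have e1 : ∑ i : Fin n, B (t • x) i * (Pi.single μ 1 : Fin n → ℝ) i = B (t • x) μ := by
    rw [Finset.sum_eq_single μ]
    · simp
    · intro b _ hb
      simp [Pi.single_eq_of_ne hb]
    · intro h; exact absurd (Finset.mem_univ μ) h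
  have e2 : ∑ i : Fin n, x i * (fderiv ℝ B (t • x)) (t • (Pi.single μ 1 : Fin n → ℝ)) i
      = t * fderiv ℝ (fun y => B y μ) (t • x) x := by
    have step : ∀ i : Fin n, (fderiv ℝ B (t • x)) (t • (Pi.single μ 1 : Fin n → ℝ)) i
        = t * fderiv ℝ (fun y => B y μ) (t • x) (Pi.single i 1) := by
      intro i
      rw [_root_.map_smul]
      have hi : (fderiv ℝ B (t • x)) (Pi.single μ 1) i
          = fderiv ℝ (fun z => B z i) (t • x) (Pi.single μ 1) := by
        rw [fderiv_comp_eq hB i]; rfl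
      rw [Pi.smul_apply, smul_eq_mul, hi, hcl μ i]
    calc ∑ i : Fin n, x i * (fderiv ℝ B (t • x)) (t • (Pi.single μ 1 : Fin n → ℝ)) i
        = ∑ i : Fin n, t * (x i * fderiv ℝ (fun y => B y μ) (t • x) (Pi.single i 1)) := by
          apply Finset.sum_congr rfl
          intro i _
          rw [step i]; ring
      _ = t * ∑ i : Fin n, x i * fderiv ℝ (fun y => B y μ) (t • x) (Pi.single i 1) := by
          rw [Finset.mul_sum]
      _ = t * fderiv ℝ (fun y => B y μ) (t • x) x := by
          rw [← clm_apply_eq_sum]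
  rw [e1, e2]

theorem integral_Fd_single {B : (Fin n → ℝ) → (Fin n → ℝ)} (hB : ContDiff ℝ 1 B)
    (hcl : ∀ (μ ν : Fin n) (y : Fin n → ℝ),
      fderiv ℝ (fun z => B z ν) y (Pi.single μ 1)
        = fderiv ℝ (fun z => B z μ) y (Pi.single ν 1))
    (x : Fin n → ℝ) (μ : Fin n) :
    (∫ t in (0:ℝ)..1, Fd B x t (Pi.single μ 1)) = B x μ := by
  set f' : ℝ → ℝ := fun t => B (t • x) μ + t * fderiv ℝ (fun y => B y μ) (t • x) x with hf'
  have hsm : Continuous fun t : ℝ => t • x := continuous_id.smul continuous_const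
  have hderiv : ∀ t : ℝ, HasDerivAt (fun u : ℝ => u * B (u • x) μ) (f' t) t := by
    intro t
    have hs : HasDerivAt (fun u : ℝ => u • x) x t := by
      simpa using (hasDerivAt_id t).smul_const x
    have hc : HasFDerivAt (fun y => B y μ) (fderiv ℝ (fun y => B y μ) (t • x)) (t • x) := by
      rw [fderiv_comp_eq hB μ]
      exact (hasFDerivAt_prj μ _).comp _ ((hB.differentiable one_ne_zero) _).hasFDerivAt
    have hBt : HasDerivAt (fun u : ℝ => B (u • x) μ)
        (fderiv ℝ (fun y => B y μ) (t • x) x) t := by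
      have h := hc.comp_hasDerivAt t hs; exact h
    have := (hasDerivAt_id t).mul hBt
    simpa [hf', add_comm, Pi.mul_def] using this
  have hcont : Continuous f' := by
    have c1 : Continuous fun t : ℝ => B (t • x) μ :=
      (continuous_apply μ).comp (hB.continuous.comp hsm)
    have c2 : Continuous fun t : ℝ => fderiv ℝ (fun y => B y μ) (t • x) x := by
      have heq : (fun t : ℝ => fderiv ℝ (fun y => B y μ) (t • x) x)
          = fun t : ℝ => ((fderiv ℝ B (t • x)) x) μ := by
        funext t
        rw [fderiv_comp_eq hB μ]
        rfl
      rw [heq]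
      exact (continuous_apply μ).comp
        (((hB.continuous_fderiv one_ne_zero).comp hsm).clm_apply continuous_const)
    exact c1.add (continuous_id.mul c2)
  have hFTC := intervalIntegral.integral_eq_sub_of_hasDerivAt
    (f := fun u : ℝ => u * B (u • x) μ) (f' := f')
    (fun t _ => hderiv t) (hcont.intervalIntegrable 0 1)
  calc (∫ t in (0:ℝ)..1, Fd B x t (Pi.single μ 1))
      = ∫ t in (0:ℝ)..1, f' t := by
        apply intervalIntegral.integral_congr
        intro t _
        exact Fd_apply hB hcl x t μ
    _ = 1 * B ((1:ℝ) • x) μ - 0 * B ((0:ℝ) • x) μ := hFTC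
    _ = B x μ := by simp

theorem potential_exists {B : (Fin n → ℝ) → (Fin n → ℝ)} (hB : ContDiff ℝ 1 B)
    (hcl : ∀ (μ ν : Fin n) (y : Fin n → ℝ),
      fderiv ℝ (fun z => B z ν) y (Pi.single μ 1)
        = fderiv ℝ (fun z => B z μ) y (Pi.single ν 1)) :
    ∃ s : (Fin n → ℝ) → ℝ, Differentiable ℝ s ∧
      ∀ (x : Fin n → ℝ) (μ : Fin n), fderiv ℝ s x (Pi.single μ 1) = B x μ := by
  refine ⟨sPot B, fun x => (hasFDerivAt_sPot hB x).differentiableAt, fun x μ => ?_⟩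
  rw [(hasFDerivAt_sPot hB x).fderiv]
  have hint : IntervalIntegrable (fun t => Fd B x t) volume 0 1 :=
    (continuous_Fd hB x).intervalIntegrable 0 1
  have happ := (ContinuousLinearMap.apply ℝ ℝ
    (Pi.single μ 1 : Fin n → ℝ)).intervalIntegral_comp_comm hint
  calc (∫ t in (0:ℝ)..1, Fd B x t) (Pi.single μ 1)
      = ∫ t in (0:ℝ)..1, Fd B x t (Pi.single μ 1) := happ.symm
    _ = B x μ := integral_Fd_single hB hcl x μ


theorem gauge_fullness {n : ℕ}
    (A A' : (Fin n → ℝ) → (Fin n → ℝ))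
    (hA : ContDiff ℝ 1 A) (hA' : ContDiff ℝ 1 A')
    (hF : ∀ (μ ν : Fin n) (x : Fin n → ℝ),
      fderiv ℝ (fun y => A' y ν) x (Pi.single μ 1)
        - fderiv ℝ (fun y => A' y μ) x (Pi.single ν 1)
      = fderiv ℝ (fun y => A y ν) x (Pi.single μ 1)
        - fderiv ℝ (fun y => A y μ) x (Pi.single ν 1)) :
    ∃ s : (Fin n → ℝ) → ℝ, Differentiable ℝ s ∧
      ∀ (x : Fin n → ℝ) (μ : Fin n),
        A' x μ = A x μ + fderiv ℝ s x (Pi.single μ 1) := by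
  have hB : ContDiff ℝ 1 (fun y => A' y - A y) := hA'.sub hA
  have hdA : ∀ (i : Fin n) (y : Fin n → ℝ), DifferentiableAt ℝ (fun z => A z i) y := fun i y =>
    ((hasFDerivAt_prj i (A y)).comp y ((hA.differentiable one_ne_zero) y).hasFDerivAt).differentiableAt
  have hdA' : ∀ (i : Fin n) (y : Fin n → ℝ), DifferentiableAt ℝ (fun z => A' z i) y := fun i y =>
    ((hasFDerivAt_prj i (A' y)).comp y
      ((hA'.differentiable one_ne_zero) y).hasFDerivAt).differentiableAt
  have hsub : ∀ (i : Fin n) (y : Fin n → ℝ),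
      fderiv ℝ (fun z => (fun y => A' y - A y) z i) y
        = fderiv ℝ (fun z => A' z i) y - fderiv ℝ (fun z => A z i) y := by
    intro i y
    exact fderiv_sub (hdA' i y) (hdA i y)
  have hcl : ∀ (μ ν : Fin n) (y : Fin n → ℝ),
      fderiv ℝ (fun z => (fun y => A' y - A y) z ν) y (Pi.single μ 1)
        = fderiv ℝ (fun z => (fun y => A' y - A y) z μ) y (Pi.single ν 1) := by
    intro μ ν y
    rw [hsub ν y, hsub μ y]
    simp only [ContinuousLinearMap.sub_apply]
    have := hF μ ν y
    linarith
  obtain ⟨s, hs, hsd⟩ := potential_exists hB hcl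
  refine ⟨s, hs, fun x μ => ?_⟩
  have := hsd x μ
  simp only [Pi.sub_apply] at this
  rw [this]
  ring
end
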